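/- A finitely aligned k-graph Λ is cofinal (for all v, w ∈ Λ^0 there exists a finite exhaustive set E ⊆ wΛ such that vΛs(α) ≠ ∅ for every α ∈ E) if and only if for every v ∈ Λ^0 and every boundary path x ∈ ∂Λ there exists n ≤ d(x) with vΛx(n) ≠ ∅. -/

import Mathlib

/-- A `k`-graph: a countable category `Λ` with a degree functor `d : Λ → ℕ^k`
satisfying the factorisation property. Morphisms form the type `Mor`,
objects (vertices) the type `Obj`. -/
structure KGraph (k : ℕ) where
  Obj : Type
  Mor : Type
  countableObj : Countable Obj
  countableMor : Countable Mor
  r : Mor → Obj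
  s : Mor → Obj
  d : Mor → (Fin k → ℕ)
  id : Obj → Mor
  comp : ∀ μ ν : Mor, s μ = r ν → Mor
  r_id : ∀ v, r (id v) = v
  s_id : ∀ v, s (id v) = v
  d_id : ∀ v, d (id v) = 0
  r_comp : ∀ μ ν h, r (comp μ ν h) = r μ
  s_comp : ∀ μ ν h, s (comp μ ν h) = s ν
  d_comp : ∀ μ ν h, d (comp μ ν h) = d μ + d ν
  id_comp : ∀ μ : Mor, comp (id (r μ)) μ (s_id (r μ)) = μ
  comp_id : ∀ μ : Mor, comp μ (id (s μ)) ((r_id (s μ)).symm) = μ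
  assoc : ∀ (μ ν ρ : Mor) (h₁ : s μ = r ν) (h₂ : s ν = r ρ),
    comp (comp μ ν h₁) ρ ((s_comp μ ν h₁).trans h₂)
      = comp μ (comp ν ρ h₂) (h₁.trans (r_comp ν ρ h₂).symm)
  factor : ∀ (lam : Mor) (m n : Fin k → ℕ), d lam = m + n →
    ∃! p : {q : Mor × Mor // s q.1 = r q.2},
      d p.val.1 = m ∧ d p.val.2 = n ∧ lam = comp p.val.1 p.val.2 p.property

namespace KGraph

variable {k : ℕ} (Λ : KGraph k)

/-- `μ` is an initial segment of `lam`, i.e. `lam = μρ` for some `ρ`. -/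
def InitSeg (μ lam : Λ.Mor) : Prop :=
  ∃ (ρ : Λ.Mor) (h : Λ.s μ = Λ.r ρ), lam = Λ.comp μ ρ h

/-- The set of minimal common extensions of `μ` and `ν`. -/
def MCE (μ ν : Λ.Mor) : Set Λ.Mor :=
  {lam | Λ.d lam = Λ.d μ ⊔ Λ.d ν ∧ Λ.InitSeg μ lam ∧ Λ.InitSeg ν lam}

/-- `Λ` is finitely aligned if all `MCE` sets are finite. -/
def FinitelyAligned : Prop := ∀ μ ν : Λ.Mor, (Λ.MCE μ ν).Finite

/-- Aperiodicity: distinct paths with the same source admit a common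
extension `τ` with `MCE (ατ, βτ) = ∅`. -/
def Aperiodic : Prop :=
  ∀ α β : Λ.Mor, α ≠ β → Λ.s α = Λ.s β →
    ∃ (τ : Λ.Mor) (hα : Λ.s α = Λ.r τ) (hβ : Λ.s β = Λ.r τ),
      Λ.MCE (Λ.comp α τ hα) (Λ.comp β τ hβ) = ∅

/-- `E` is a finite exhaustive subset of `vΛ`. -/
def IsFE (v : Λ.Obj) (E : Set Λ.Mor) : Prop :=
  E.Finite ∧ (∀ α ∈ E, Λ.r α = v) ∧
    ∀ μ : Λ.Mor, Λ.r μ = v → ∃ lam ∈ E, (Λ.MCE μ lam).Nonempty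

/-- The segment `lam(p,q)` of a path `lam`, for `p ≤ q ≤ d lam`,
obtained from the factorisation property. -/
noncomputable def seg (lam : Λ.Mor) (p q : Fin k → ℕ) (hpq : p ≤ q) (hq : q ≤ Λ.d lam) :
    Λ.Mor := by
  have h1 : Λ.d lam = p + (Λ.d lam - p) := by
    funext i; exact (Nat.add_sub_cancel' ((hpq.trans hq) i)).symm
  have hspec := (Λ.factor lam p (Λ.d lam - p) h1).exists.choose_spec
  refine (Λ.factor ((Λ.factor lam p (Λ.d lam - p) h1).exists.choose).val.2
      (q - p) (Λ.d lam - q) ?_).exists.choose.val.1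
  rw [hspec.2.1]
  funext i
  have h3 : p i ≤ q i := hpq i
  have h4 : q i ≤ Λ.d lam i := hq i
  simp only [Pi.sub_apply, Pi.add_apply]
  omega

/-- A (possibly infinite) path in `Λ`: a degree-preserving functor from
`Ω_{k,m}` (for `m = deg ∈ (ℕ ∪ {∞})^k`) to `Λ`, recorded by its segments. -/
structure InfPath (Λ : KGraph k) where
  deg : Fin k → ℕ∞
  seg : ∀ p q : Fin k → ℕ, p ≤ q → (∀ i, (q i : ℕ∞) ≤ deg i) → Λ.Mor
  d_seg : ∀ p q hpq hq, Λ.d (seg p q hpq hq) = q - p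
  comp_seg : ∀ (p q r : Fin k → ℕ) (hpq : p ≤ q) (hqr : q ≤ r)
      (hq : ∀ i, (q i : ℕ∞) ≤ deg i) (hr : ∀ i, (r i : ℕ∞) ≤ deg i),
    ∃ h : Λ.s (seg p q hpq hq) = Λ.r (seg q r hqr hr),
      Λ.comp (seg p q hpq hq) (seg q r hqr hr) h = seg p r (hpq.trans hqr) hr

/-- The vertex `x(n)` of an infinite path. -/
def InfPath.vert {Λ : KGraph k} (x : Λ.InfPath) (n : Fin k → ℕ) (hn : ∀ i, (n i : ℕ∞) ≤ x.deg i) : Λ.Obj :=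
  Λ.r (x.seg n n le_rfl hn)

/-- The range `r(x) = x(0)` of an infinite path. -/
def InfPath.rng {Λ : KGraph k} (x : Λ.InfPath) : Λ.Obj :=
  Λ.r (x.seg 0 0 le_rfl (fun i => by simp))

/-- `x` is a boundary path: it hits every finite exhaustive set. -/
def IsBoundary (x : Λ.InfPath) : Prop :=
  ∀ (n : Fin k → ℕ) (hn : ∀ i, (n i : ℕ∞) ≤ x.deg i) (E : Set Λ.Mor),
    Λ.IsFE (x.vert n hn) E →
    ∃ (p : Fin k → ℕ) (hp : ∀ i, ((n + p) i : ℕ∞) ≤ x.deg i),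
      x.seg n (n + p) le_self_add hp ∈ E

/-- The set of boundary paths with range `v` is `v∂Λ`. -/

private lemma enat_aux {a b : ℕ} {D : ℕ∞} (h2 : (a : ℕ∞) ≤ D) (h1 : (b : ℕ∞) ≤ D - a) :
    ((a + b : ℕ) : ℕ∞) ≤ D := by
  cases D with
  | top => exact le_top
  | coe dN =>
    have ha : a ≤ dN := by exact_mod_cast h2
    rw [← ENat.natCast_sub] at h1
    have hb : b ≤ dN - a := by exact_mod_cast h1
    exact_mod_cast (by omega : a + b ≤ dN)

/-- The shifted path `σ^m(x)`. -/
def InfPath.shift {Λ : KGraph k} (x : Λ.InfPath) (m : Fin k → ℕ) (hm : ∀ i, (m i : ℕ∞) ≤ x.deg i) :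
    Λ.InfPath where
  deg := fun i => x.deg i - (m i : ℕ∞)
  seg := fun p q hpq hq => x.seg (m + p) (m + q) (add_le_add_right hpq m)
    (fun i => by
      have := enat_aux (hm i) (hq i)
      simpa using this)
  d_seg := fun p q hpq hq => by
    rw [x.d_seg]
    funext i
    simp only [Pi.sub_apply, Pi.add_apply]
    omega
  comp_seg := fun p q r hpq hqr hq hr =>
    x.comp_seg (m + p) (m + q) (m + r) (add_le_add_right hpq m) (add_le_add_right hqr m) _ _

/-- `w = lam · z` : the path `w` extends `z` by the finite path `lam`,
i.e. `w(0, d lam) = lam` and `σ^{d lam}(w) = z`. -/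
def InfPath.ExtendsBy {Λ : KGraph k} (w z : Λ.InfPath) (lam : Λ.Mor) : Prop :=
  ∃ h : ∀ i, ((Λ.d lam) i : ℕ∞) ≤ w.deg i,
    w.seg 0 (Λ.d lam) zero_le h = lam ∧ w.shift (Λ.d lam) h = z

/-- Local periodicity `m, n` at `v`. -/
def LocalPeriodicity (m n : Fin k → ℕ) (v : Λ.Obj) : Prop :=
  ∀ x : Λ.InfPath, Λ.IsBoundary x → x.rng = v →
    (∀ i, (((m ⊔ n) i : ℕ) : ℕ∞) ≤ x.deg i) ∧
    ∃ (hm : ∀ i, (m i : ℕ∞) ≤ x.deg i) (hn : ∀ i, (n i : ℕ∞) ≤ x.deg i),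
      x.shift m hm = x.shift n hn

/-- Cofinality of `Λ`, stated in terms of finite paths. -/
def Cofinal : Prop :=
  ∀ v w : Λ.Obj, ∃ E : Set Λ.Mor, Λ.IsFE w E ∧
    ∀ α ∈ E, ∃ lam : Λ.Mor, Λ.r lam = v ∧ Λ.s lam = Λ.s α


section HeadTail

variable {k : ℕ} {Λ : KGraph k}

private lemma sub_add_cancel'' {m n : Fin k → ℕ} (h : m ≤ n) : n = m + (n - m) := by
  funext i; have := Pi.le_def.mp h i; simp only [Pi.add_apply, Pi.sub_apply]; omega

/-- Uniqueness of factorisations. -/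
private lemma factor_unique {lam μ ν μ' ν' : Λ.Mor} (h : Λ.s μ = Λ.r ν)
    (h' : Λ.s μ' = Λ.r ν') (e : Λ.comp μ ν h = lam) (e' : Λ.comp μ' ν' h' = lam)
    (hd : Λ.d μ = Λ.d μ') : μ = μ' ∧ ν = ν' := by
  have hdl : Λ.d lam = Λ.d μ + Λ.d ν := by rw [← e, Λ.d_comp]
  have hdl' : Λ.d lam = Λ.d μ' + Λ.d ν' := by rw [← e', Λ.d_comp]
  have hdν : Λ.d ν = Λ.d ν' := by
    have := hdl.symm.trans hdl'; rw [hd] at this; exact add_left_cancel this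
  have hu := (Λ.factor lam (Λ.d μ) (Λ.d ν) hdl).unique
    (y₁ := ⟨(μ, ν), h⟩) (y₂ := ⟨(μ', ν'), h'⟩)
    ⟨rfl, rfl, e.symm⟩ ⟨hd.symm, hdν.symm, e'.symm⟩
  constructor
  · exact congrArg (fun p => p.val.1) hu
  · exact congrArg (fun p => p.val.2) hu

private noncomputable def split (lam : Λ.Mor) (m : Fin k → ℕ) (h : m ≤ Λ.d lam) :
    {q : Λ.Mor × Λ.Mor // Λ.s q.1 = Λ.r q.2} :=
  (Λ.factor lam m (Λ.d lam - m) (sub_add_cancel'' h)).exists.choose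

/-- Initial segment of degree `m`. -/
private noncomputable def hd (lam : Λ.Mor) (m : Fin k → ℕ) (h : m ≤ Λ.d lam) : Λ.Mor :=
  (split lam m h).val.1

/-- Final segment after degree `m`. -/
private noncomputable def tl (lam : Λ.Mor) (m : Fin k → ℕ) (h : m ≤ Λ.d lam) : Λ.Mor :=
  (split lam m h).val.2

private lemma split_spec (lam : Λ.Mor) (m : Fin k → ℕ) (h : m ≤ Λ.d lam) :
    Λ.d (hd lam m h) = m ∧ Λ.d (tl lam m h) = Λ.d lam - m ∧
      ∃ hc : Λ.s (hd lam m h) = Λ.r (tl lam m h), Λ.comp (hd lam m h) (tl lam m h) hc = lam := by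
  have hs := (Λ.factor lam m (Λ.d lam - m) (sub_add_cancel'' h)).exists.choose_spec
  exact ⟨hs.1, hs.2.1, (split lam m h).property, hs.2.2.symm⟩

private lemma d_hd (lam : Λ.Mor) (m : Fin k → ℕ) (h : m ≤ Λ.d lam) :
    Λ.d (hd lam m h) = m := (split_spec lam m h).1

private lemma d_tl (lam : Λ.Mor) (m : Fin k → ℕ) (h : m ≤ Λ.d lam) :
    Λ.d (tl lam m h) = Λ.d lam - m := (split_spec lam m h).2.1

private lemma s_hd_eq_r_tl (lam : Λ.Mor) (m : Fin k → ℕ) (h : m ≤ Λ.d lam) :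
    Λ.s (hd lam m h) = Λ.r (tl lam m h) := (split lam m h).property

private lemma comp_hd_tl (lam : Λ.Mor) (m : Fin k → ℕ) (h : m ≤ Λ.d lam) :
    Λ.comp (hd lam m h) (tl lam m h) (s_hd_eq_r_tl lam m h) = lam :=
  (split_spec lam m h).2.2.choose_spec

private lemma r_hd (lam : Λ.Mor) (m : Fin k → ℕ) (h : m ≤ Λ.d lam) :
    Λ.r (hd lam m h) = Λ.r lam := by
  conv_rhs => rw [← comp_hd_tl lam m h]
  rw [Λ.r_comp]

private lemma s_tl (lam : Λ.Mor) (m : Fin k → ℕ) (h : m ≤ Λ.d lam) :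
    Λ.s (tl lam m h) = Λ.s lam := by
  conv_rhs => rw [← comp_hd_tl lam m h]
  rw [Λ.s_comp]

/-- Any factorisation agrees with `hd`/`tl`. -/
private lemma eq_hd_tl {lam μ ν : Λ.Mor} {hc : Λ.s μ = Λ.r ν}
    (e : Λ.comp μ ν hc = lam) {m : Fin k → ℕ} (hdm : Λ.d μ = m) (h : m ≤ Λ.d lam) :
    μ = hd lam m h ∧ ν = tl lam m h :=
  factor_unique hc (s_hd_eq_r_tl lam m h) e (comp_hd_tl lam m h) (hdm.trans (d_hd lam m h).symm)

private lemma hd_congr (lam : Λ.Mor) {m m' : Fin k → ℕ} (e : m = m') (h : m ≤ Λ.d lam) :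
    hd lam m h = hd lam m' (e ▸ h) := by subst e; rfl

private lemma comp_congr {μ μ' ν : Λ.Mor} (e : μ = μ') (h : Λ.s μ' = Λ.r ν) (h' : Λ.s μ = Λ.r ν) :
    Λ.comp μ ν h' = Λ.comp μ' ν h := by subst e; rfl

private lemma comp_congr' {μ ν ν' : Λ.Mor} (e : ν = ν') (h : Λ.s μ = Λ.r ν') (h' : Λ.s μ = Λ.r ν) :
    Λ.comp μ ν h' = Λ.comp μ ν' h := by subst e; rfl

private lemma comp_congr2 {μ μ' ν ν' : Λ.Mor} (eμ : μ = μ') (eν : ν = ν')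
    (h : Λ.s μ' = Λ.r ν') (h' : Λ.s μ = Λ.r ν) :
    Λ.comp μ ν h' = Λ.comp μ' ν' h := by subst eμ; subst eν; rfl

private lemma hd_congr_mor {lam lam' : Λ.Mor} (e : lam = lam') (m : Fin k → ℕ)
    (h : m ≤ Λ.d lam) (h' : m ≤ Λ.d lam') : hd lam m h = hd lam' m h' := by subst e; rfl

private lemma tl_congr_mor {lam lam' : Λ.Mor} (e : lam = lam') (m : Fin k → ℕ)
    (h : m ≤ Λ.d lam) (h' : m ≤ Λ.d lam') : tl lam m h = tl lam' m h' := by subst e; rfl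

private lemma d_le_of_comp {μ ν : Λ.Mor} (h : Λ.s μ = Λ.r ν) :
    Λ.d μ ≤ Λ.d (Λ.comp μ ν h) := by
  rw [Λ.d_comp]; exact le_add_of_nonneg_right (by intro i; simp)

/-- `hd` is unaffected by extending the path. -/
private lemma hd_comp {μ ν : Λ.Mor} (h : Λ.s μ = Λ.r ν) (m : Fin k → ℕ)
    (hm : m ≤ Λ.d μ) (hm' : m ≤ Λ.d (Λ.comp μ ν h)) :
    hd (Λ.comp μ ν h) m hm' = hd μ m hm := by
  have hc2 : Λ.s (tl μ m hm) = Λ.r ν := by rw [s_tl]; exact h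
  have hs : Λ.s (Λ.comp (hd μ m hm) (tl μ m hm) (s_hd_eq_r_tl μ m hm)) = Λ.r ν := by
    rw [Λ.s_comp]; exact hc2
  have e3 : Λ.comp (Λ.comp (hd μ m hm) (tl μ m hm) (s_hd_eq_r_tl μ m hm)) ν hs
      = Λ.comp μ ν h := comp_congr (comp_hd_tl μ m hm) h hs
  have e4 := (Λ.assoc (hd μ m hm) (tl μ m hm) ν (s_hd_eq_r_tl μ m hm) hc2).symm.trans e3
  exact ((eq_hd_tl e4 (d_hd μ m hm) hm').1).symm

private lemma tl_comp {μ ν : Λ.Mor} (h : Λ.s μ = Λ.r ν) (m : Fin k → ℕ)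
    (hm : m ≤ Λ.d μ) (hm' : m ≤ Λ.d (Λ.comp μ ν h)) :
    ∃ hc : Λ.s (tl μ m hm) = Λ.r ν,
      tl (Λ.comp μ ν h) m hm' = Λ.comp (tl μ m hm) ν hc := by
  have hc2 : Λ.s (tl μ m hm) = Λ.r ν := by rw [s_tl]; exact h
  have hs : Λ.s (Λ.comp (hd μ m hm) (tl μ m hm) (s_hd_eq_r_tl μ m hm)) = Λ.r ν := by
    rw [Λ.s_comp]; exact hc2
  have e3 : Λ.comp (Λ.comp (hd μ m hm) (tl μ m hm) (s_hd_eq_r_tl μ m hm)) ν hs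
      = Λ.comp μ ν h := comp_congr (comp_hd_tl μ m hm) h hs
  have e4 := (Λ.assoc (hd μ m hm) (tl μ m hm) ν (s_hd_eq_r_tl μ m hm) hc2).symm.trans e3
  exact ⟨hc2, ((eq_hd_tl e4 (d_hd μ m hm) hm').2).symm⟩

/-- `hd` of `hd`. -/
private lemma hd_hd (lam : Λ.Mor) {m m' : Fin k → ℕ} (h' : m' ≤ Λ.d lam)
    (hm : m ≤ Λ.d (hd lam m' h')) (h : m ≤ Λ.d lam) :
    hd (hd lam m' h') m hm = hd lam m h := by
  have e := comp_hd_tl lam m' h'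
  have h2 : m ≤ Λ.d (Λ.comp (hd lam m' h') (tl lam m' h') (s_hd_eq_r_tl lam m' h')) := by
    rw [e]; exact h
  calc hd (hd lam m' h') m hm
      = hd (Λ.comp (hd lam m' h') (tl lam m' h') (s_hd_eq_r_tl lam m' h')) m h2 :=
        (hd_comp (s_hd_eq_r_tl lam m' h') m hm h2).symm
    _ = hd lam m h := hd_congr_mor e m h2 h

/-- `tl` of `tl`. -/
private lemma tl_tl (lam : Λ.Mor) {m p : Fin k → ℕ} (h : m + p ≤ Λ.d lam)
    (hm : m ≤ Λ.d lam) (hp : p ≤ Λ.d (tl lam m hm)) :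
    tl (tl lam m hm) p hp = tl lam (m + p) h := by
  have e2 := comp_hd_tl (tl lam m hm) p hp
  have hcAB : Λ.s (hd lam m hm) = Λ.r (hd (tl lam m hm) p hp) :=
    (s_hd_eq_r_tl lam m hm).trans (r_hd _ p hp).symm
  have hs : Λ.s (hd lam m hm) = Λ.r (Λ.comp (hd (tl lam m hm) p hp)
      (tl (tl lam m hm) p hp) (s_hd_eq_r_tl _ p hp)) := by
    rw [Λ.r_comp]; exact hcAB
  have e1 : Λ.comp (hd lam m hm) (Λ.comp (hd (tl lam m hm) p hp)
      (tl (tl lam m hm) p hp) (s_hd_eq_r_tl _ p hp)) hs = lam :=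
    (comp_congr' e2 (s_hd_eq_r_tl lam m hm) hs).trans (comp_hd_tl lam m hm)
  have e4 := (Λ.assoc (hd lam m hm) (hd (tl lam m hm) p hp) (tl (tl lam m hm) p hp)
      hcAB (s_hd_eq_r_tl _ p hp)).trans e1
  exact (eq_hd_tl e4 (by rw [Λ.d_comp, d_hd, d_hd]) h).2

/-- `hd X a · hd (tl X a) b = hd X (a+b)`. -/
private lemma hd_add (X : Λ.Mor) {a b : Fin k → ℕ} (hab : a + b ≤ Λ.d X)
    (ha : a ≤ Λ.d X) (hb : b ≤ Λ.d (tl X a ha)) :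
    ∃ hc : Λ.s (hd X a ha) = Λ.r (hd (tl X a ha) b hb),
      Λ.comp (hd X a ha) (hd (tl X a ha) b hb) hc = hd X (a + b) hab := by
  have haH : a ≤ Λ.d (hd X (a + b) hab) := by rw [d_hd]; exact le_self_add
  have hXa : hd (hd X (a + b) hab) a haH = hd X a ha := hd_hd X hab haH ha
  have e1 := comp_hd_tl (hd X (a + b) hab) a haH
  have hs : Λ.s (Λ.comp (hd (hd X (a + b) hab) a haH) (tl (hd X (a + b) hab) a haH)
      (s_hd_eq_r_tl _ a haH)) = Λ.r (tl X (a + b) hab) := by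
    rw [Λ.s_comp, s_tl]; exact s_hd_eq_r_tl X (a + b) hab
  have e3 : Λ.comp (Λ.comp (hd (hd X (a + b) hab) a haH) (tl (hd X (a + b) hab) a haH)
      (s_hd_eq_r_tl _ a haH)) (tl X (a + b) hab) hs = X :=
    (comp_congr e1 (s_hd_eq_r_tl X (a + b) hab) hs).trans (comp_hd_tl X (a + b) hab)
  have hc2 : Λ.s (tl (hd X (a + b) hab) a haH) = Λ.r (tl X (a + b) hab) := by
    rw [s_tl]; exact s_hd_eq_r_tl X (a + b) hab
  have e4 := (Λ.assoc (hd (hd X (a + b) hab) a haH) (tl (hd X (a + b) hab) a haH)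
      (tl X (a + b) hab) (s_hd_eq_r_tl _ a haH) hc2).symm.trans e3
  have e5 := eq_hd_tl e4 ((d_hd _ a haH).trans rfl) ha
  have hdeg : Λ.d (tl (hd X (a + b) hab) a haH) = b := by
    rw [d_tl, d_hd]; funext i; simp only [Pi.sub_apply, Pi.add_apply]; omega
  have e6 := eq_hd_tl (m := b) e5.2 hdeg hb
  have hc : Λ.s (hd X a ha) = Λ.r (hd (tl X a ha) b hb) := by
    rw [← hXa, ← e6.1]; exact s_hd_eq_r_tl _ a haH
  exact ⟨hc, (comp_congr2 hXa.symm e6.1.symm (s_hd_eq_r_tl _ a haH) hc).trans e1⟩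

end HeadTail

section InitSegMCE

variable {k : ℕ} {Λ : KGraph k}

private lemma eq_id_of_d_zero {μ : Λ.Mor} (h : Λ.d μ = 0) : μ = Λ.id (Λ.r μ) := by
  have h0 : Λ.d μ = 0 + 0 := by rw [h]; funext i; simp
  have e1 : Λ.comp (Λ.id (Λ.r μ)) μ (Λ.s_id (Λ.r μ)) = μ := Λ.id_comp μ
  have e2 : Λ.comp μ (Λ.id (Λ.s μ)) ((Λ.r_id (Λ.s μ)).symm) = μ := Λ.comp_id μ
  exact (factor_unique _ _ e1 e2 (by rw [Λ.d_id, h])).1.symm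

private lemma initSeg_refl (μ : Λ.Mor) : Λ.InitSeg μ μ :=
  ⟨Λ.id (Λ.s μ), (Λ.r_id (Λ.s μ)).symm, (Λ.comp_id μ).symm⟩

private lemma initSeg_comp {μ ν : Λ.Mor} (h : Λ.s μ = Λ.r ν) :
    Λ.InitSeg μ (Λ.comp μ ν h) := ⟨ν, h, rfl⟩

private lemma initSeg_hd (lam : Λ.Mor) (m : Fin k → ℕ) (h : m ≤ Λ.d lam) :
    Λ.InitSeg (hd lam m h) lam :=
  ⟨tl lam m h, s_hd_eq_r_tl lam m h, (comp_hd_tl lam m h).symm⟩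

private lemma d_le_of_initSeg {μ lam : Λ.Mor} (h : Λ.InitSeg μ lam) : Λ.d μ ≤ Λ.d lam := by
  obtain ⟨ρ, hc, e⟩ := h
  rw [e]; exact d_le_of_comp hc

private lemma hd_full (μ : Λ.Mor) : hd μ (Λ.d μ) le_rfl = μ :=
  ((eq_hd_tl (Λ.comp_id μ) rfl le_rfl).1).symm

private lemma hd_of_initSeg {μ lam : Λ.Mor} (h : Λ.InitSeg μ lam)
    (hle : Λ.d μ ≤ Λ.d lam) : hd lam (Λ.d μ) hle = μ := by
  obtain ⟨ρ, hc, e⟩ := h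
  subst e
  exact (hd_comp hc (Λ.d μ) le_rfl hle).trans (hd_full μ)

private lemma initSeg_trans {μ ν lam : Λ.Mor} (h1 : Λ.InitSeg μ ν) (h2 : Λ.InitSeg ν lam) :
    Λ.InitSeg μ lam := by
  obtain ⟨ρ, hc, e⟩ := h1
  obtain ⟨σ, hc', e'⟩ := h2
  subst e; subst e'
  refine ⟨Λ.comp ρ σ ((Λ.s_comp μ ρ hc) ▸ hc'), hc.trans (Λ.r_comp ρ σ _).symm, ?_⟩
  exact Λ.assoc μ ρ σ hc ((Λ.s_comp μ ρ hc) ▸ hc')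

private lemma initSeg_hd_of_initSeg {μ lam : Λ.Mor} (h : Λ.InitSeg μ lam)
    {m : Fin k → ℕ} (hm : Λ.d μ ≤ m) (hmd : m ≤ Λ.d lam) :
    Λ.InitSeg μ (hd lam m hmd) := by
  have hle := d_le_of_initSeg h
  have h2 : Λ.d μ ≤ Λ.d (hd lam m hmd) := by rw [d_hd]; exact hm
  have := hd_hd lam hmd h2 hle
  rw [hd_of_initSeg h hle] at this
  rw [← this]
  exact initSeg_hd _ _ _

private lemma sup_d_le {μ ν ζ : Λ.Mor} (h1 : Λ.InitSeg μ ζ) (h2 : Λ.InitSeg ν ζ) :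
    Λ.d μ ⊔ Λ.d ν ≤ Λ.d ζ :=
  sup_le (d_le_of_initSeg h1) (d_le_of_initSeg h2)

private lemma mem_MCE_hd {μ ν ζ : Λ.Mor} (h1 : Λ.InitSeg μ ζ) (h2 : Λ.InitSeg ν ζ) :
    hd ζ (Λ.d μ ⊔ Λ.d ν) (sup_d_le h1 h2) ∈ Λ.MCE μ ν := by
  refine ⟨d_hd _ _ _, ?_, ?_⟩
  · exact initSeg_hd_of_initSeg h1 le_sup_left _
  · exact initSeg_hd_of_initSeg h2 le_sup_right _

private lemma MCE_nonempty_of_commonExt {μ ν ζ : Λ.Mor} (h1 : Λ.InitSeg μ ζ)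
    (h2 : Λ.InitSeg ν ζ) : (Λ.MCE μ ν).Nonempty :=
  ⟨_, mem_MCE_hd h1 h2⟩

private lemma hd_zero (lam : Λ.Mor) (h : 0 ≤ Λ.d lam) : hd lam 0 h = Λ.id (Λ.r lam) := by
  have := eq_id_of_d_zero (μ := hd lam 0 h) (d_hd lam 0 h)
  rw [r_hd] at this; exact this

private lemma r_tl_zero (lam : Λ.Mor) (h : 0 ≤ Λ.d lam) : Λ.r (tl lam 0 h) = Λ.r lam := by
  rw [← s_hd_eq_r_tl lam 0 h, hd_zero, Λ.s_id]

private lemma isFE_singleton_id (u : Λ.Obj) : Λ.IsFE u {Λ.id u} := by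
  refine ⟨Set.finite_singleton _, ?_, ?_⟩
  · rintro α rfl; exact Λ.r_id u
  · intro μ hμ
    subst hμ
    refine ⟨Λ.id (Λ.r μ), rfl, μ, ?_, initSeg_refl μ, ?_⟩
    · rw [Λ.d_id]; funext i; simp
    · exact ⟨μ, Λ.s_id (Λ.r μ), (Λ.id_comp μ).symm⟩

end InitSegMCE

section ExtFE

variable {k : ℕ} {Λ : KGraph k}

private lemma r_of_initSeg {a b : Λ.Mor} (h : Λ.InitSeg a b) : Λ.r b = Λ.r a := by
  obtain ⟨ρ, hc, e⟩ := h; rw [e, Λ.r_comp]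

private lemma comp_initSeg_left {a b lam : Λ.Mor} (h : Λ.InitSeg a b)
    (hc : Λ.s lam = Λ.r a) (hc' : Λ.s lam = Λ.r b) :
    Λ.InitSeg (Λ.comp lam a hc) (Λ.comp lam b hc') := by
  obtain ⟨σ, hcσ, e⟩ := h
  have h2 : Λ.s lam = Λ.r (Λ.comp a σ hcσ) := by rw [Λ.r_comp]; exact hc
  refine ⟨σ, (Λ.s_comp lam a hc) ▸ hcσ, ?_⟩
  exact (comp_congr' e h2 hc').trans (Λ.assoc lam a σ hc hcσ).symm

/-- The extension set `Ext(μ; E)`. -/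
private def Ext (μ : Λ.Mor) (E : Set Λ.Mor) : Set Λ.Mor :=
  {ρ | ∃ hc : Λ.s μ = Λ.r ρ, ∃ α ∈ E, Λ.comp μ ρ hc ∈ Λ.MCE μ α}

private lemma ext_isFE (hFA : Λ.FinitelyAligned) {μ : Λ.Mor} {E : Set Λ.Mor}
    (hE : Λ.IsFE (Λ.r μ) E) : Λ.IsFE (Λ.s μ) (Ext μ E) := by
  classical
  obtain ⟨hfin, hrange, hexh⟩ := hE
  refine ⟨?_, ?_, ?_⟩
  · -- finiteness
    have hsub : Ext μ E ⊆ (fun ζ => if h : Λ.d μ ≤ Λ.d ζ then tl ζ (Λ.d μ) h else ζ) ''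
        (⋃ α ∈ E, Λ.MCE μ α) := by
      rintro ρ ⟨hc, α, hα, hmem⟩
      refine ⟨Λ.comp μ ρ hc, Set.mem_biUnion hα hmem, ?_⟩
      have hle : Λ.d μ ≤ Λ.d (Λ.comp μ ρ hc) := d_le_of_comp hc
      simp only [dif_pos hle]
      exact ((eq_hd_tl (lam := Λ.comp μ ρ hc) rfl rfl hle).2).symm
    exact Set.Finite.subset
      (Set.Finite.image _ (Set.Finite.biUnion hfin (fun α _ => hFA μ α))) hsub
  · rintro ρ ⟨hc, -⟩; exact hc.symm
  · -- exhaustive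
    intro τ hτ
    have hcμτ : Λ.s μ = Λ.r τ := hτ.symm
    obtain ⟨α, hαE, ζ, hζ⟩ := hexh (Λ.comp μ τ hcμτ) (Λ.r_comp _ _ _)
    obtain ⟨hdζ, hIμτ, hIα⟩ := hζ
    have hIμ : Λ.InitSeg μ ζ := initSeg_trans (initSeg_comp hcμτ) hIμτ
    have hsup : Λ.d μ ⊔ Λ.d α ≤ Λ.d ζ := sup_d_le hIμ hIα
    have hζ₀mem : hd ζ (Λ.d μ ⊔ Λ.d α) hsup ∈ Λ.MCE μ α := mem_MCE_hd hIμ hIα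
    have hleμ : Λ.d μ ≤ Λ.d (hd ζ (Λ.d μ ⊔ Λ.d α) hsup) := d_le_of_initSeg hζ₀mem.2.1
    have hcρ : Λ.s μ = Λ.r (tl (hd ζ (Λ.d μ ⊔ Λ.d α) hsup) (Λ.d μ) hleμ) := by
      rw [← s_hd_eq_r_tl _ (Λ.d μ) hleμ, hd_of_initSeg hζ₀mem.2.1 hleμ]
    have hcompρ : Λ.comp μ (tl (hd ζ (Λ.d μ ⊔ Λ.d α) hsup) (Λ.d μ) hleμ) hcρ
        = hd ζ (Λ.d μ ⊔ Λ.d α) hsup :=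
      (comp_congr (hd_of_initSeg hζ₀mem.2.1 hleμ).symm (s_hd_eq_r_tl _ (Λ.d μ) hleμ)
        hcρ).trans (comp_hd_tl _ (Λ.d μ) hleμ)
    have hρExt : tl (hd ζ (Λ.d μ ⊔ Λ.d α) hsup) (Λ.d μ) hleμ ∈ Ext μ E :=
      ⟨hcρ, α, hαE, by rw [hcompρ]; exact hζ₀mem⟩
    -- common extension of τ and ρ : the tail  tl ζ (d μ)
    have hleμζ : Λ.d μ ≤ Λ.d ζ := d_le_of_initSeg hIμ
    obtain ⟨η, hcη, eζ⟩ := hIμτ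
    have hcτη : Λ.s τ = Λ.r η := (Λ.s_comp μ τ hcμτ) ▸ hcη
    have eζ' : Λ.comp μ (Λ.comp τ η hcτη) (hcμτ.trans (Λ.r_comp τ η hcτη).symm) = ζ :=
      (Λ.assoc μ τ η hcμτ hcτη).symm.trans eζ.symm
    have hξ : Λ.comp τ η hcτη = tl ζ (Λ.d μ) hleμζ := (eq_hd_tl eζ' rfl hleμζ).2
    obtain ⟨κ, hcκ, eζ2⟩ := initSeg_hd ζ (Λ.d μ ⊔ Λ.d α) hsup
    have hcκ' : Λ.s (tl (hd ζ (Λ.d μ ⊔ Λ.d α) hsup) (Λ.d μ) hleμ) = Λ.r κ :=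
      (s_tl _ (Λ.d μ) hleμ).trans hcκ
    have h'' : Λ.s (Λ.comp μ (tl (hd ζ (Λ.d μ ⊔ Λ.d α) hsup) (Λ.d μ) hleμ) hcρ) = Λ.r κ :=
      (Λ.s_comp _ _ _).trans hcκ'
    have eζ2' := (Λ.assoc μ _ κ hcρ hcκ').symm.trans
      ((comp_congr hcompρ hcκ h'').trans eζ2.symm)
    have hξ2 : Λ.comp (tl (hd ζ (Λ.d μ ⊔ Λ.d α) hsup) (Λ.d μ) hleμ) κ hcκ'
        = tl ζ (Λ.d μ) hleμζ := (eq_hd_tl eζ2' rfl hleμζ).2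
    refine ⟨_, hρExt, MCE_nonempty_of_commonExt (ζ := tl ζ (Λ.d μ) hleμζ) ?_ ?_⟩
    · rw [← hξ]; exact initSeg_comp hcτη
    · rw [← hξ2]; exact initSeg_comp hcκ'

/-- Refinement of a finite exhaustive set. -/
private lemma refine_isFE {u : Λ.Obj} {E : Set Λ.Mor} (hE : Λ.IsFE u E)
    {lam : Λ.Mor} (hlam : lam ∈ E) {F : Set Λ.Mor} (hF : Λ.IsFE (Λ.s lam) F) :
    Λ.IsFE u ((E \ {lam}) ∪
      {β | ∃ ρ ∈ F, ∃ hc : Λ.s lam = Λ.r ρ, β = Λ.comp lam ρ hc}) := by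
  classical
  obtain ⟨hfin, hrange, hexh⟩ := hE
  obtain ⟨hfinF, hrangeF, hexhF⟩ := hF
  refine ⟨?_, ?_, ?_⟩
  · refine Set.Finite.union (hfin.subset Set.diff_subset) ?_
    have hsub : {β | ∃ ρ ∈ F, ∃ hc : Λ.s lam = Λ.r ρ, β = Λ.comp lam ρ hc} ⊆
        (fun ρ => if h : Λ.s lam = Λ.r ρ then Λ.comp lam ρ h else ρ) '' F := by
      rintro β ⟨ρ, hρ, hc, rfl⟩
      exact ⟨ρ, hρ, by simp only [dif_pos hc]⟩
    exact (hfinF.image _).subset hsub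
  · rintro β (⟨hβ, -⟩ | ⟨ρ, hρ, hc, rfl⟩)
    · exact hrange β hβ
    · rw [Λ.r_comp]; exact hrange lam hlam
  · intro μ hμ
    obtain ⟨α, hαE, ζ, hζ⟩ := hexh μ hμ
    by_cases hne : α = lam
    · subst hne
      obtain ⟨hdζ, hIμ, hIα⟩ := hζ
      obtain ⟨ξ, hcξ, eζ⟩ := hIα
      obtain ⟨ρ, hρF, η, hη⟩ := hexhF ξ hcξ.symm
      obtain ⟨hdη, hIξη, hIρη⟩ := hη
      have hcη : Λ.s α = Λ.r η := hcξ.trans (r_of_initSeg hIξη).symm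
      have hcρ2 : Λ.s α = Λ.r ρ := (hrangeF ρ hρF).symm
      refine ⟨Λ.comp α ρ hcρ2, Or.inr ⟨ρ, hρF, hcρ2, rfl⟩, ?_⟩
      refine MCE_nonempty_of_commonExt (ζ := Λ.comp α η hcη) ?_ ?_
      · refine initSeg_trans hIμ ?_
        rw [eζ]
        exact comp_initSeg_left hIξη hcξ hcη
      · exact comp_initSeg_left hIρη hcρ2 hcη
    · exact ⟨α, Or.inl ⟨hαE, hne⟩, ζ, hζ⟩

end ExtFE

section QStep

variable {k : ℕ} {Λ : KGraph k} {R : Λ.Obj → Prop}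

/-- If every vertex of an FE set admits an all-reachable FE set, the whole thing refines
to an all-reachable FE set. -/
private lemma allreach (hR : ∀ lam : Λ.Mor, R (Λ.r lam) → R (Λ.s lam)) :
    ∀ (n : ℕ) (u : Λ.Obj) (E : Set Λ.Mor), Λ.IsFE u E →
      (∀ α ∈ E, ¬ R (Λ.s α) → ∃ Eα, Λ.IsFE (Λ.s α) Eα ∧ ∀ β ∈ Eα, R (Λ.s β)) →
      {α ∈ E | ¬ R (Λ.s α)}.ncard ≤ n →
      ∃ E', Λ.IsFE u E' ∧ ∀ β ∈ E', R (Λ.s β) := by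
  intro n
  induction n with
  | zero =>
    intro u E hE hloc hcard
    refine ⟨E, hE, ?_⟩
    intro β hβ
    by_contra hnR
    have : β ∈ {α ∈ E | ¬ R (Λ.s α)} := ⟨hβ, hnR⟩
    have hfin : {α ∈ E | ¬ R (Λ.s α)}.Finite := hE.1.subset (Set.sep_subset _ _)
    have := Set.ncard_pos hfin |>.mpr ⟨β, this⟩
    omega
  | succ n ih =>
    intro u E hE hloc hcard
    by_cases hex : ∃ lam ∈ E, ¬ R (Λ.s lam)
    · obtain ⟨lam, hlamE, hlamR⟩ := hex
      obtain ⟨Elam, hElam, hElamR⟩ := hloc lam hlamE hlamR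
      set E' := (E \ {lam}) ∪
        {β | ∃ ρ ∈ Elam, ∃ hc : Λ.s lam = Λ.r ρ, β = Λ.comp lam ρ hc} with hE'def
      have hE' : Λ.IsFE u E' := refine_isFE hE hlamE hElam
      have hsub : {α ∈ E' | ¬ R (Λ.s α)} ⊆ {α ∈ E | ¬ R (Λ.s α)} \ {lam} := by
        rintro β ⟨(⟨hβE, hβne⟩ | ⟨ρ, hρ, hc, rfl⟩), hβR⟩
        · exact ⟨⟨hβE, hβR⟩, hβne⟩
        · exact absurd ((Λ.s_comp lam ρ hc) ▸ hElamR ρ hρ) hβR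
      have hfin : {α ∈ E | ¬ R (Λ.s α)}.Finite := hE.1.subset (Set.sep_subset _ _)
      have hcard' : {α ∈ E' | ¬ R (Λ.s α)}.ncard ≤ n := by
        have h1 := Set.ncard_le_ncard hsub (hfin.subset Set.diff_subset)
        have h2 : ({α ∈ E | ¬ R (Λ.s α)} \ {lam}).ncard
            = {α ∈ E | ¬ R (Λ.s α)}.ncard - 1 :=
          Set.ncard_diff_singleton_of_mem (s := {α ∈ E | ¬ R (Λ.s α)}) ⟨hlamE, hlamR⟩
        omega
      refine ih u E' hE' ?_ hcard'
      intro α hαE' hαR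
      have : α ∈ {α ∈ E | ¬ R (Λ.s α)} \ {lam} := hsub ⟨hαE', hαR⟩
      exact hloc α this.1.1 hαR
    · push_neg at hex
      exact ⟨E, hE, hex⟩

/-- The key step: from a "bad" vertex, every FE set contains a path to a bad vertex. -/
private lemma Qstep (hR : ∀ lam : Λ.Mor, R (Λ.r lam) → R (Λ.s lam))
    {u : Λ.Obj} (hQ : ∀ E, Λ.IsFE u E → ∃ α ∈ E, ¬ R (Λ.s α))
    {F : Set Λ.Mor} (hF : Λ.IsFE u F) :
    ∃ ρ ∈ F, ∀ E, Λ.IsFE (Λ.s ρ) E → ∃ α ∈ E, ¬ R (Λ.s α) := by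
  by_contra hcon
  push_neg at hcon
  have hloc : ∀ α ∈ F, ¬ R (Λ.s α) → ∃ Eα, Λ.IsFE (Λ.s α) Eα ∧ ∀ β ∈ Eα, R (Λ.s β) :=
    fun α hα _ => hcon α hα
  obtain ⟨E', hE', hall⟩ := allreach hR {α ∈ F | ¬ R (Λ.s α)}.ncard u F hF hloc le_rfl
  obtain ⟨α, hαE', hαR⟩ := hQ E' hE'
  exact hαR (hall α hαE')

end QStep

section Construction

variable {k : ℕ} {Λ : KGraph k}

private lemma sub_le_sub'' {p q r : Fin k → ℕ} (h : q ≤ r) : q - p ≤ r - p :=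
  fun i => by simp only [Pi.sub_apply]; exact Nat.sub_le_sub_right (h i) _

private lemma tl_congr (lam : Λ.Mor) {m m' : Fin k → ℕ} (e : m = m') (h : m ≤ Λ.d lam) :
    tl lam m h = tl lam m' (e ▸ h) := by subst e; rfl

/-- The segment `lam(p,q)`. -/
private noncomputable def segOf (lam : Λ.Mor) (p q : Fin k → ℕ) (hpq : p ≤ q)
    (hq : q ≤ Λ.d lam) : Λ.Mor :=
  hd (tl lam p (hpq.trans hq)) (q - p)
    (by rw [d_tl]; exact sub_le_sub'' hq)

private lemma d_segOf (lam : Λ.Mor) (p q : Fin k → ℕ) (hpq : p ≤ q) (hq : q ≤ Λ.d lam) :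
    Λ.d (segOf lam p q hpq hq) = q - p := d_hd _ _ _

private lemma r_segOf (lam : Λ.Mor) (p q : Fin k → ℕ) (hpq : p ≤ q) (hq : q ≤ Λ.d lam) :
    Λ.r (segOf lam p q hpq hq) = Λ.r (tl lam p (hpq.trans hq)) := r_hd _ _ _

/-- Stability of segments under extension. -/
private lemma segOf_stable {lam lam' : Λ.Mor} (hI : Λ.InitSeg lam lam')
    (p q : Fin k → ℕ) (hpq : p ≤ q) (hq : q ≤ Λ.d lam) (hq' : q ≤ Λ.d lam') :
    segOf lam p q hpq hq = segOf lam' p q hpq hq' := by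
  obtain ⟨ρ, hc, e⟩ := hI
  subst e
  have hA : p ≤ Λ.d lam := hpq.trans hq
  have hA' : p ≤ Λ.d (Λ.comp lam ρ hc) := hpq.trans hq'
  obtain ⟨hc2, htl⟩ := tl_comp hc p hA hA'
  have hB : q - p ≤ Λ.d (tl lam p hA) := by rw [d_tl]; exact sub_le_sub'' hq
  have hC : q - p ≤ Λ.d (Λ.comp (tl lam p hA) ρ hc2) := hB.trans (d_le_of_comp hc2)
  show hd (tl lam p hA) (q - p) _ = hd (tl (Λ.comp lam ρ hc) p hA') (q - p) _
  exact ((hd_congr_mor htl (q - p) _ hC).trans (hd_comp hc2 (q - p) hB hC)).symm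

private lemma r_tl_initSeg {lam lam' : Λ.Mor} (hI : Λ.InitSeg lam lam')
    (n : Fin k → ℕ) (h : n ≤ Λ.d lam) (h' : n ≤ Λ.d lam') :
    Λ.r (tl lam n h) = Λ.r (tl lam' n h') := by
  obtain ⟨ρ, hc, e⟩ := hI
  subst e
  have h'' : n ≤ Λ.d (Λ.comp lam ρ hc) := h'
  obtain ⟨hc2, htl⟩ := tl_comp hc n h h''
  rw [htl, Λ.r_comp]

/-- Composition of segments. -/
private lemma segOf_comp (lam : Λ.Mor) (p q r : Fin k → ℕ) (hpq : p ≤ q) (hqr : q ≤ r)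
    (hr : r ≤ Λ.d lam) (hq : q ≤ Λ.d lam) :
    ∃ hc : Λ.s (segOf lam p q hpq hq) = Λ.r (segOf lam q r hqr hr),
      Λ.comp (segOf lam p q hpq hq) (segOf lam q r hqr hr) hc
        = segOf lam p r (hpq.trans hqr) hr := by
  have hA : p ≤ Λ.d lam := hpq.trans hq
  have haq : q - p ≤ Λ.d (tl lam p hA) := by rw [d_tl]; exact sub_le_sub'' hq
  have hab : (q - p) + (r - q) ≤ Λ.d (tl lam p hA) := by
    rw [d_tl]
    exact fun i => by
      simp only [Pi.add_apply, Pi.sub_apply]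
      have h1 := Pi.le_def.mp hpq i; have h2 := Pi.le_def.mp hqr i
      have h3 := Pi.le_def.mp hr i
      omega
  have hb : r - q ≤ Λ.d (tl (tl lam p hA) (q - p) haq) := by
    rw [d_tl, d_tl]
    exact fun i => by
      simp only [Pi.sub_apply]
      have h1 := Pi.le_def.mp hpq i; have h2 := Pi.le_def.mp hqr i
      have h3 := Pi.le_def.mp hr i
      omega
  obtain ⟨hc0, e0⟩ := hd_add (tl lam p hA) hab haq hb
  have epq : p + (q - p) = q := by
    funext i; simp only [Pi.add_apply, Pi.sub_apply]
    have := Pi.le_def.mp hpq i; omega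
  have hpqsum : p + (q - p) ≤ Λ.d lam := by rw [epq]; exact hq
  have eT : tl (tl lam p hA) (q - p) haq = tl lam q hq := by
    have e1 := tl_tl lam hpqsum hA haq
    have e2 := tl_congr lam epq hpqsum
    exact e1.trans e2
  have hb2 : r - q ≤ Λ.d (tl lam q hq) := by rw [d_tl]; exact sub_le_sub'' hr
  have eS : hd (tl (tl lam p hA) (q - p) haq) (r - q) hb = segOf lam q r hqr hr :=
    hd_congr_mor eT (r - q) hb hb2
  have eadd : (q - p) + (r - q) = r - p := by
    funext i; simp only [Pi.add_apply, Pi.sub_apply]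
    have h1 := Pi.le_def.mp hpq i; have h2 := Pi.le_def.mp hqr i; omega
  have hcF : Λ.s (segOf lam p q hpq hq) = Λ.r (segOf lam q r hqr hr) := by
    rw [← eS]; exact hc0
  refine ⟨hcF, ?_⟩
  exact ((comp_congr' eS.symm hc0 hcF).trans e0).trans (hd_congr (tl lam p hA) eadd hab)

private lemma enat_le_iSup {g : ℕ → ℕ} {n : ℕ} (h : (n : ℕ∞) ≤ ⨆ j, (g j : ℕ∞)) :
    ∃ j, n ≤ g j := by
  by_contra hc
  push_neg at hc
  have hb : (⨆ j, (g j : ℕ∞)) ≤ ((n - 1 : ℕ) : ℕ∞) := by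
    refine iSup_le fun j => ?_
    exact_mod_cast Nat.le_sub_one_of_lt (hc j)
  have h2 : (n : ℕ∞) ≤ ((n - 1 : ℕ) : ℕ∞) := h.trans hb
  have h3 : n ≤ n - 1 := by exact_mod_cast h2
  have h0 : 0 < n := lt_of_le_of_lt (Nat.zero_le _) (hc 0)
  omega

/-- Reachability from `v`. -/
private def Reach (Λ : KGraph k) (v u : Λ.Obj) : Prop :=
  ∃ lam : Λ.Mor, Λ.r lam = v ∧ Λ.s lam = u

/-- `u` is "bad": every FE set at `u` contains a path whose source is unreachable. -/
private def Bad (Λ : KGraph k) (v u : Λ.Obj) : Prop :=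
  ∀ E, Λ.IsFE u E → ∃ α ∈ E, ¬ Reach Λ v (Λ.s α)

private lemma reach_fwd (v : Λ.Obj) :
    ∀ lam : Λ.Mor, Reach Λ v (Λ.r lam) → Reach Λ v (Λ.s lam) := by
  rintro lam ⟨η, hr, hs⟩
  exact ⟨Λ.comp η lam hs, by rw [Λ.r_comp]; exact hr, Λ.s_comp _ _ _⟩

private lemma bad_not_reach {v u : Λ.Obj} (h : Bad Λ v u) : ¬ Reach Λ v u := by
  obtain ⟨α, hα, hnR⟩ := h {Λ.id u} (isFE_singleton_id u)
  rw [Set.mem_singleton_iff] at hα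
  subst hα
  rw [Λ.s_id] at hnR
  exact hnR

/-- One step of the inductive construction. -/
private lemma step_exists (hFA : Λ.FinitelyAligned) (v : Λ.Obj)
    (μ : Λ.Mor) (hQ : Bad Λ v (Λ.s μ)) (n : Fin k → ℕ) (E : Set Λ.Mor) :
    ∃ μ' : Λ.Mor, Λ.InitSeg μ μ' ∧ Λ.r μ' = Λ.r μ ∧ Bad Λ v (Λ.s μ') ∧
      ∀ (h : n ≤ Λ.d μ), Λ.IsFE (Λ.r (tl μ n h)) E →
        ∃ α ∈ E, ∃ (h1 : n ≤ Λ.d μ') (h2 : Λ.d α ≤ Λ.d (tl μ' n h1)),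
          hd (tl μ' n h1) (Λ.d α) h2 = α := by
  by_cases hcond : ∃ h : n ≤ Λ.d μ, Λ.IsFE (Λ.r (tl μ n h)) E
  · obtain ⟨hn, hEfe⟩ := hcond
    have hFext : Λ.IsFE (Λ.s (tl μ n hn)) (Ext (tl μ n hn) E) := ext_isFE hFA hEfe
    rw [s_tl] at hFext
    obtain ⟨ρ, hρ, hQρ⟩ := Qstep (reach_fwd v) hQ hFext
    obtain ⟨hcρ, α, hαE, hmce⟩ := hρ
    have hcμρ : Λ.s μ = Λ.r ρ := (s_tl μ n hn).symm.trans hcρ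
    refine ⟨Λ.comp μ ρ hcμρ, initSeg_comp hcμρ, Λ.r_comp _ _ _,
      (Λ.s_comp _ _ _).symm ▸ hQρ, ?_⟩
    intro h _
    have h1 : n ≤ Λ.d (Λ.comp μ ρ hcμρ) := le_trans hn (d_le_of_comp hcμρ)
    obtain ⟨hc2, htl⟩ := tl_comp hcμρ n hn h1
    have hIα : Λ.InitSeg α (Λ.comp (tl μ n hn) ρ hc2) := hmce.2.2
    have hdα : Λ.d α ≤ Λ.d (Λ.comp (tl μ n hn) ρ hc2) := d_le_of_initSeg hIα
    have h2 : Λ.d α ≤ Λ.d (tl (Λ.comp μ ρ hcμρ) n h1) := by rw [htl]; exact hdα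
    refine ⟨α, hαE, h1, h2, ?_⟩
    exact (hd_congr_mor htl (Λ.d α) h2 hdα).trans (hd_of_initSeg hIα hdα)
  · refine ⟨μ, initSeg_refl μ, rfl, hQ, ?_⟩
    intro h hE
    exact absurd ⟨h, hE⟩ hcond

variable (hFA : Λ.FinitelyAligned) (v w : Λ.Obj) (hQw : Bad Λ v w)
  (enum : ℕ → (Fin k → ℕ) × Set Λ.Mor)

/-- The chain of finite paths. -/
private noncomputable def chain : ℕ → {μ : Λ.Mor // Λ.r μ = w ∧ Bad Λ v (Λ.s μ)} :=
  Nat.rec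
    ⟨Λ.id w, Λ.r_id w, by rw [Λ.s_id]; exact hQw⟩
    (fun j p =>
      ⟨(step_exists hFA v p.1 p.2.2 (enum j).1 (enum j).2).choose,
       ((step_exists hFA v p.1 p.2.2 (enum j).1 (enum j).2).choose_spec.2.1).trans p.2.1,
       (step_exists hFA v p.1 p.2.2 (enum j).1 (enum j).2).choose_spec.2.2.1⟩)

private lemma chain_succ (j : ℕ) :
    Λ.InitSeg (chain hFA v w hQw enum j).1 (chain hFA v w hQw enum (j+1)).1 ∧
    ∀ (h : (enum j).1 ≤ Λ.d (chain hFA v w hQw enum j).1),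
      Λ.IsFE (Λ.r (tl (chain hFA v w hQw enum j).1 (enum j).1 h)) (enum j).2 →
      ∃ α ∈ (enum j).2, ∃ (h1 : (enum j).1 ≤ Λ.d (chain hFA v w hQw enum (j+1)).1)
        (h2 : Λ.d α ≤ Λ.d (tl (chain hFA v w hQw enum (j+1)).1 (enum j).1 h1)),
        hd (tl (chain hFA v w hQw enum (j+1)).1 (enum j).1 h1) (Λ.d α) h2 = α := by
  have h := (step_exists hFA v (chain hFA v w hQw enum j).1
    (chain hFA v w hQw enum j).2.2 (enum j).1 (enum j).2).choose_spec
  exact ⟨h.1, h.2.2.2⟩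

private lemma chain_mono {j j' : ℕ} (h : j ≤ j') :
    Λ.InitSeg (chain hFA v w hQw enum j).1 (chain hFA v w hQw enum j').1 := by
  induction j', h using Nat.le_induction with
  | base => exact initSeg_refl _
  | succ j' hj ih => exact initSeg_trans ih (chain_succ hFA v w hQw enum j').1

/-- The limiting degree. -/
private noncomputable def cD : Fin k → ℕ∞ :=
  fun i => ⨆ j, (Λ.d ((chain hFA v w hQw enum j).1) i : ℕ∞)

private lemma exists_idx (q : Fin k → ℕ) (hq : ∀ i, (q i : ℕ∞) ≤ cD hFA v w hQw enum i) :
    ∃ j, q ≤ Λ.d ((chain hFA v w hQw enum j).1) := by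
  have hj : ∀ i, ∃ j, q i ≤ Λ.d ((chain hFA v w hQw enum j).1) i :=
    fun i => enat_le_iSup (hq i)
  choose f hf using hj
  refine ⟨Finset.univ.sup f, fun i => ?_⟩
  exact le_trans (hf i)
    (d_le_of_initSeg (chain_mono hFA v w hQw enum (Finset.le_sup (Finset.mem_univ i))) i)

private lemma segc_indep (j j' : ℕ) (p q : Fin k → ℕ) (hpq : p ≤ q)
    (hq : q ≤ Λ.d ((chain hFA v w hQw enum j).1))
    (hq' : q ≤ Λ.d ((chain hFA v w hQw enum j').1)) :
    segOf ((chain hFA v w hQw enum j).1) p q hpq hq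
      = segOf ((chain hFA v w hQw enum j').1) p q hpq hq' := by
  rcases le_total j j' with hle | hle
  · exact segOf_stable (chain_mono hFA v w hQw enum hle) p q hpq hq hq'
  · exact (segOf_stable (chain_mono hFA v w hQw enum hle) p q hpq hq' hq).symm

private lemma r_tl_chain_indep (j j' : ℕ) (n : Fin k → ℕ)
    (h : n ≤ Λ.d ((chain hFA v w hQw enum j).1))
    (h' : n ≤ Λ.d ((chain hFA v w hQw enum j').1)) :
    Λ.r (tl ((chain hFA v w hQw enum j).1) n h)
      = Λ.r (tl ((chain hFA v w hQw enum j').1) n h') := by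
  rcases le_total j j' with hle | hle
  · exact r_tl_initSeg (chain_mono hFA v w hQw enum hle) n h h'
  · exact (r_tl_initSeg (chain_mono hFA v w hQw enum hle) n h' h).symm

/-- The limiting boundary path. -/
private noncomputable def limitPath : Λ.InfPath where
  deg := cD hFA v w hQw enum
  seg := fun p q hpq hq =>
    segOf ((chain hFA v w hQw enum (exists_idx hFA v w hQw enum q hq).choose).1) p q hpq
      (exists_idx hFA v w hQw enum q hq).choose_spec
  d_seg := fun p q hpq hq => d_hd _ _ _
  comp_seg := fun p q r hpq hqr hq hr => by
    have hq1 := (exists_idx hFA v w hQw enum q hq).choose_spec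
    have hr1 := (exists_idx hFA v w hQw enum r hr).choose_spec
    have hqJr : q ≤ Λ.d ((chain hFA v w hQw enum
        (exists_idx hFA v w hQw enum r hr).choose).1) := le_trans hqr hr1
    obtain ⟨hc, e0⟩ := segOf_comp
      ((chain hFA v w hQw enum (exists_idx hFA v w hQw enum r hr).choose).1)
      p q r hpq hqr hr1 hqJr
    have eI := segc_indep hFA v w hQw enum
      (exists_idx hFA v w hQw enum q hq).choose
      (exists_idx hFA v w hQw enum r hr).choose p q hpq hq1 hqJr
    refine ⟨?_, ?_⟩
    · show Λ.s (segOf ((chain hFA v w hQw enum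
          (exists_idx hFA v w hQw enum q hq).choose).1) p q hpq hq1)
        = Λ.r (segOf ((chain hFA v w hQw enum
          (exists_idx hFA v w hQw enum r hr).choose).1) q r hqr hr1)
      rw [eI]; exact hc
    · show Λ.comp (segOf ((chain hFA v w hQw enum
          (exists_idx hFA v w hQw enum q hq).choose).1) p q hpq hq1)
        (segOf ((chain hFA v w hQw enum
          (exists_idx hFA v w hQw enum r hr).choose).1) q r hqr hr1) _
        = segOf ((chain hFA v w hQw enum
          (exists_idx hFA v w hQw enum r hr).choose).1) p r (hpq.trans hqr) hr1
      exact (comp_congr eI hc _).trans e0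

end Construction

/-- A finitely aligned `k`-graph is cofinal iff every vertex can reach
every boundary path. -/
theorem cofinal_iff_reaches_boundary_paths (hFA : Λ.FinitelyAligned) :
    Λ.Cofinal ↔
      ∀ (v : Λ.Obj) (x : Λ.InfPath), Λ.IsBoundary x →
        ∃ (n : Fin k → ℕ) (hn : ∀ i, (n i : ℕ∞) ≤ x.deg i) (lam : Λ.Mor),
          Λ.r lam = v ∧ Λ.s lam = x.vert n hn := by
  constructor
  · -- easy direction
    intro hcof v x hx
    obtain ⟨E, hE, hreach⟩ := hcof v x.rng
    have h0 : ∀ i, (((0 : Fin k → ℕ) i : ℕ) : ℕ∞) ≤ x.deg i := fun i => by simp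
    have hE' : Λ.IsFE (x.vert 0 h0) E := by
      have hv : x.vert 0 h0 = x.rng := rfl
      rw [hv]; exact hE
    obtain ⟨p, hp, hseg⟩ := hx 0 h0 E hE'
    obtain ⟨lam, hrl, hsl⟩ := hreach _ hseg
    refine ⟨0 + p, hp, lam, hrl, ?_⟩
    obtain ⟨hc, -⟩ := x.comp_seg 0 (0 + p) (0 + p) le_self_add le_rfl hp hp
    exact hsl.trans hc
  · -- hard direction
    intro hRHS v w
    by_contra hnc
    push_neg at hnc
    have hQw : Bad Λ v w := by
      intro E hE
      obtain ⟨α, hα, hno⟩ := hnc E hE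
      refine ⟨α, hα, ?_⟩
      rintro ⟨lam, h1, h2⟩
      exact hno lam h1 h2
    haveI := Λ.countableMor
    obtain ⟨enum, henum_rec⟩ : ∃ enum : ℕ → (Fin k → ℕ) × Set Λ.Mor,
        ∀ (n : Fin k → ℕ) (F : Set Λ.Mor), F.Finite → ∀ N : ℕ, ∃ j, N ≤ j ∧ enum j = (n, F) := by
      obtain ⟨f, hf⟩ := exists_surjective_nat ((Fin k → ℕ) × Finset Λ.Mor)
      refine ⟨fun j => ((f (Nat.unpair j).2).1, ((f (Nat.unpair j).2).2 : Set Λ.Mor)), ?_⟩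
      intro n F hFfin N
      obtain ⟨b, hb⟩ := hf (n, hFfin.toFinset)
      refine ⟨Nat.pair N b, Nat.left_le_pair N b, ?_⟩
      simp only [Nat.unpair_pair, hb, hFfin.coe_toFinset]
    set x := limitPath hFA v w hQw enum with hxdef
    have hbound : Λ.IsBoundary x := by
      intro n hn E hE
      obtain ⟨j0, hj0⟩ := exists_idx hFA v w hQw enum n hn
      obtain ⟨j, hjge, hje⟩ := henum_rec n E hE.1 j0
      have h1 : (enum j).1 = n := by rw [hje]
      have h2 : (enum j).2 = E := by rw [hje]
      subst h1
      subst h2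
      have hnj : (enum j).1 ≤ Λ.d ((chain hFA v w hQw enum j).1) :=
        le_trans hj0 (d_le_of_initSeg (chain_mono hFA v w hQw enum hjge))
      have hvert : x.vert (enum j).1 hn = Λ.r (tl ((chain hFA v w hQw enum
          (exists_idx hFA v w hQw enum (enum j).1 hn).choose).1)
          (enum j).1
          (le_rfl.trans (exists_idx hFA v w hQw enum
            (enum j).1 hn).choose_spec)) := r_hd _ _ _
      have hfe : Λ.IsFE (Λ.r (tl ((chain hFA v w hQw enum j).1)
          (enum j).1 hnj)) (enum j).2 := by
        rw [r_tl_chain_indep hFA v w hQw enum j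
          (exists_idx hFA v w hQw enum (enum j).1 hn).choose
          (enum j).1 hnj
          (le_rfl.trans (exists_idx hFA v w hQw enum (enum j).1 hn).choose_spec),
          ← hvert]
        exact hE
      obtain ⟨α, hαE, hh1, hh2, hhd⟩ := (chain_succ hFA v w hQw enum (j)).2 hnj hfe
      have hh2' : Λ.d α ≤ Λ.d ((chain hFA v w hQw enum (j + 1)).1)
          - (enum (j)).1 := by
        rw [← d_tl ((chain hFA v w hQw enum (j + 1)).1)
          (enum (j)).1 hh1]
        exact hh2
      have hnp : (enum (j)).1 + Λ.d α
          ≤ Λ.d ((chain hFA v w hQw enum (j + 1)).1) := by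
        refine Pi.le_def.mpr fun i => ?_
        have ha := Pi.le_def.mp hh2' i
        have hb2 := Pi.le_def.mp hh1 i
        simp only [Pi.sub_apply] at ha
        simp only [Pi.add_apply]
        omega
      have hp : ∀ i, ((((enum (j)).1 + Λ.d α) i : ℕ) : ℕ∞) ≤ x.deg i := by
        intro i
        have hcast : ((((enum (j)).1 + Λ.d α) i : ℕ) : ℕ∞)
            ≤ ((Λ.d ((chain hFA v w hQw enum (j + 1)).1) i : ℕ) : ℕ∞) := by
          exact_mod_cast Pi.le_def.mp hnp i
        exact hcast.trans (le_iSup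
          (fun j' => ((Λ.d ((chain hFA v w hQw enum j').1) i : ℕ) : ℕ∞)) (j + 1))
      refine ⟨Λ.d α, hp, ?_⟩
      have hJp := (exists_idx hFA v w hQw enum
        ((enum (j)).1 + Λ.d α) hp).choose_spec
      have e1 : x.seg (enum (j)).1 ((enum (j)).1 + Λ.d α)
            le_self_add hp
          = segOf ((chain hFA v w hQw enum (j + 1)).1) (enum (j)).1
            ((enum (j)).1 + Λ.d α) le_self_add hnp := by
        exact segc_indep hFA v w hQw enum _ (j + 1) _ _ le_self_add hJp hnp
      have e2 : ((enum (j)).1 + Λ.d α) - (enum (j)).1 = Λ.d α := by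
        funext i; simp only [Pi.sub_apply, Pi.add_apply]; omega
      have e3 : segOf ((chain hFA v w hQw enum (j + 1)).1) (enum (j)).1
          ((enum (j)).1 + Λ.d α) le_self_add hnp = α := by
        show hd (tl ((chain hFA v w hQw enum (j + 1)).1) (enum (j)).1
          (le_self_add.trans hnp)) (((enum (j)).1 + Λ.d α) - (enum (j)).1)
          (by rw [d_tl]; exact sub_le_sub'' hnp) = α
        have e4 := hd_congr (tl ((chain hFA v w hQw enum (j + 1)).1)
          (enum (j)).1 (le_self_add.trans hnp)) e2
          (by rw [d_tl]; exact sub_le_sub'' hnp)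
        exact e4.trans hhd
      rw [e1, e3]
      exact hαE
    obtain ⟨n, hn, lam, hrl, hsl⟩ := hRHS v x hbound
    have hvert : x.vert n hn = Λ.r (tl ((chain hFA v w hQw enum
        (exists_idx hFA v w hQw enum n hn).choose).1) n
        (le_rfl.trans (exists_idx hFA v w hQw enum n hn).choose_spec)) := r_hd _ _ _
    have hreach : Reach Λ v (Λ.r (tl ((chain hFA v w hQw enum
        (exists_idx hFA v w hQw enum n hn).choose).1) n
        (le_rfl.trans (exists_idx hFA v w hQw enum n hn).choose_spec))) :=
      ⟨lam, hrl, hsl.trans hvert⟩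
    have h2 := reach_fwd v _ hreach
    rw [s_tl] at h2
    exact bad_not_reach
      (chain hFA v w hQw enum (exists_idx hFA v w hQw enum n hn).choose).2.2 h2

end KGraph
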